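/- For every natural number n, the subspace of SU(2)^3 consisting of all triples (A, B, C) such that Aⁿ*B = B*Aⁿ, Aⁿ*C = C*Aⁿ, and B*C = C*B is connected. -/

import Mathlib

/-- `SU(2)`, i.e. `Matrix.specialUnitaryGroup (Fin 2) ℂ`, topologized as a subspace of the
`2 × 2` complex matrices (via the subtype topology). -/
abbrev SU2 := Matrix.specialUnitaryGroup (Fin 2) ℂ

/-- The group structure on `SU(2)` (inverse given by conjugate transpose). -/
noncomputable instance : Group SU2 :=
  { (inferInstance : Monoid SU2) with
    inv := fun A => ⟨star A.1, by
      refine ⟨⟨?_, ?_⟩, ?_⟩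
      · rw [star_star]; exact A.2.1.2
      · rw [star_star]; exact A.2.1.1
      · show Matrix.det (star A.1) = 1
        rw [Matrix.star_eq_conjTranspose, Matrix.det_conjTranspose]
        have h : Matrix.det A.1 = 1 := A.2.2
        rw [h, star_one]⟩
    inv_mul_cancel := fun A => Subtype.ext A.2.1.1 }

/-- The commutator `[a, b] = a * b * a⁻¹ * b⁻¹`. -/
def brk {G : Type*} [Group G] (a b : G) : G := a * b * a⁻¹ * b⁻¹

open Matrix Complex

noncomputable section SU2Conn

/-- Non-centrality discriminant. -/
def dd (g : SU2) : ℝ := (g.1 0 0).im ^ 2 + Complex.normSq (g.1 0 1)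

lemma dd_nonneg (g : SU2) : 0 ≤ dd g := add_nonneg (sq_nonneg _) (Complex.normSq_nonneg _)

lemma su2_entries (g : SU2) :
    g.1 1 1 = star (g.1 0 0) ∧ g.1 1 0 = -star (g.1 0 1) ∧
      g.1 0 0 * star (g.1 0 0) + g.1 0 1 * star (g.1 0 1) = 1 := by
  have hdet : g.1.det = 1 := g.2.2
  have h1 : g.1 * g.1.adjugate = 1 := by rw [Matrix.mul_adjugate, hdet, one_smul]
  have hst : star g.1 = g.1.adjugate := by
    calc star g.1 = star g.1 * (g.1 * g.1.adjugate) := by rw [h1, mul_one]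
      _ = star g.1 * g.1 * g.1.adjugate := by rw [mul_assoc]
      _ = g.1.adjugate := by rw [g.2.1.1, one_mul]
  rw [Matrix.adjugate_fin_two] at hst
  have h11 : g.1 1 1 = star (g.1 0 0) := by
    have := congrFun (congrFun hst 1) 1
    simp [Matrix.star_apply, Complex.star_def] at this
    rw [Complex.star_def, ← this, Complex.conj_conj]
  have h10 : g.1 1 0 = -star (g.1 0 1) := by
    have := congrFun (congrFun hst 0) 1
    simp [Matrix.star_apply, Complex.star_def] at this
    have h2 := congrArg (starRingEnd ℂ) this
    rw [Complex.conj_conj, map_neg] at h2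
    rw [h2, Complex.star_def]
  refine ⟨h11, h10, ?_⟩
  have hd2 := g.1.det_fin_two
  rw [hdet, h11, h10] at hd2
  linear_combination -hd2

lemma dd_eq (g : SU2) : (g.1 0 0).re ^ 2 + dd g = 1 := by
  obtain ⟨-, -, h⟩ := su2_entries g
  simp only [Complex.star_def, Complex.mul_conj, ← Complex.ofReal_add] at h
  have h' : Complex.normSq (g.1 0 0) + Complex.normSq (g.1 0 1) = 1 := by exact_mod_cast h
  rw [Complex.normSq_apply] at h'
  rw [dd]
  nlinarith [h']

lemma mem_su2 (u v : ℂ) (huv : u * star u + v * star v = 1) :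
    !![u, v; -star v, star u] ∈ Matrix.specialUnitaryGroup (Fin 2) ℂ := by
  have huv' : u * (starRingEnd ℂ) u + v * (starRingEnd ℂ) v = 1 := by
    simpa [Complex.star_def] using huv
  refine ⟨⟨?_, ?_⟩, ?_⟩
  · ext i j
    fin_cases i <;> fin_cases j <;>
      simp [Matrix.mul_apply, Fin.sum_univ_two, Matrix.star_apply, Matrix.one_apply,
        Complex.star_def] <;>
      first
        | linear_combination huv'
        | linear_combination -huv'
        | linear_combination (starRingEnd ℂ) v * u - u * (starRingEnd ℂ) v
  · ext i j
    fin_cases i <;> fin_cases j <;>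
      simp [Matrix.mul_apply, Fin.sum_univ_two, Matrix.star_apply, Matrix.one_apply,
        Complex.star_def] <;>
      first
        | linear_combination huv'
        | linear_combination -huv'
        | linear_combination (starRingEnd ℂ) v * u - u * (starRingEnd ℂ) v
  · show Matrix.det !![u, v; -star v, star u] = 1
    rw [Matrix.det_fin_two_of]
    simp only [Complex.star_def]
    linear_combination huv'

lemma torus_path (g : SU2) (hd : 0 < dd g) (θ : ℝ) :
    ∃ γ : ℝ → SU2, Continuous γ ∧ γ 0 = 1 ∧
      (∀ t, ∃ p q : ℂ, (γ t).1 = p • 1 + q • g.1) ∧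
      (γ 1).1 = ((Real.cos θ - Real.sin θ / Real.sqrt (dd g) * (g.1 0 0).re : ℝ) : ℂ) • 1 +
        ((Real.sin θ / Real.sqrt (dd g) : ℝ) : ℂ) • g.1 := by
  obtain ⟨h11, h10, hnorm⟩ := su2_entries g
  set a := g.1 0 0 with ha
  set b := g.1 0 1 with hb
  set s := Real.sqrt (dd g) with hsdef
  have hs : 0 < s := Real.sqrt_pos.mpr hd
  have hs0 : s ≠ 0 := ne_of_gt hs
  have hs2 : s ^ 2 = a.im ^ 2 + Complex.normSq b := Real.sq_sqrt (dd_nonneg g)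
  set c := a.re with hc
  set P : ℝ → ℝ := fun t => Real.cos (t * θ) - Real.sin (t * θ) / s * c with hPdef
  set Q : ℝ → ℝ := fun t => Real.sin (t * θ) / s with hQdef
  have hPQ : ∀ t, P t = Real.cos (t * θ) - Q t * c := fun t => rfl
  have hQs : ∀ t, Q t * s = Real.sin (t * θ) := fun t => div_mul_cancel₀ _ hs0
  -- the real norm identity
  have hreal : ∀ t, P t ^ 2 + 2 * c * (P t * Q t) + Q t ^ 2 * Complex.normSq a
      + Q t ^ 2 * Complex.normSq b = 1 := by
    intro t
    have hna : Complex.normSq a = c ^ 2 + a.im ^ 2 := by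
      rw [Complex.normSq_apply]; ring
    have hsc := Real.sin_sq_add_cos_sq (t * θ)
    rw [hna]
    linear_combination (P t + Real.cos (t * θ) - Q t * c + 2 * c * Q t) * hPQ t + hsc +
      (Q t * s + Real.sin (t * θ)) * hQs t - Q t ^ 2 * hs2
  -- the complex norm identity
  have huv : ∀ t, ((P t : ℂ) + (Q t : ℂ) * a) * star ((P t : ℂ) + (Q t : ℂ) * a)
      + ((Q t : ℂ) * b) * star ((Q t : ℂ) * b) = 1 := by
    intro t
    have h1 : a * (starRingEnd ℂ) a = ((Complex.normSq a : ℝ) : ℂ) := Complex.mul_conj a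
    have h2 : b * (starRingEnd ℂ) b = ((Complex.normSq b : ℝ) : ℂ) := Complex.mul_conj b
    have h3 : a + (starRingEnd ℂ) a = 2 * (c : ℂ) := by
      rw [Complex.add_conj]; push_cast; ring
    have hrealC := congrArg (fun x : ℝ => (x : ℂ)) (hreal t)
    push_cast at hrealC
    simp only [Complex.star_def, map_add, _root_.map_mul, Complex.conj_ofReal]
    linear_combination hrealC + (Q t : ℂ) ^ 2 * h1 + (Q t : ℂ) ^ 2 * h2 +
      (P t : ℂ) * (Q t : ℂ) * h3
  -- the path, as span of 1 and g
  set γval : ℝ → Matrix (Fin 2) (Fin 2) ℂ :=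
    fun t => ((P t : ℝ) : ℂ) • 1 + ((Q t : ℝ) : ℂ) • g.1 with hγval
  have hMval : ∀ t, !![(P t : ℂ) + (Q t : ℂ) * a, (Q t : ℂ) * b;
      -star ((Q t : ℂ) * b), star ((P t : ℂ) + (Q t : ℂ) * a)] = γval t := by
    intro t
    ext i j
    fin_cases i <;> fin_cases j <;>
      simp [hγval, Matrix.one_apply, Complex.star_def, map_add, _root_.map_mul,
        Complex.conj_ofReal, h11, h10, ha, hb] <;> ring
  have hmem : ∀ t, γval t ∈ Matrix.specialUnitaryGroup (Fin 2) ℂ := fun t =>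
    hMval t ▸ mem_su2 _ _ (huv t)
  refine ⟨fun t => ⟨γval t, hmem t⟩, ?_, ?_, fun t => ⟨(P t : ℂ), (Q t : ℂ), rfl⟩, ?_⟩
  · apply Continuous.subtype_mk
    have hPc : Continuous fun t => ((P t : ℝ) : ℂ) :=
      Complex.continuous_ofReal.comp
        ((Real.continuous_cos.comp (continuous_id.mul continuous_const)).sub
          (((Real.continuous_sin.comp (continuous_id.mul continuous_const)).div_const s).mul
            continuous_const))
    have hQc : Continuous fun t => ((Q t : ℝ) : ℂ) :=
      Complex.continuous_ofReal.comp
        ((Real.continuous_sin.comp (continuous_id.mul continuous_const)).div_const s)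
    exact (hPc.smul continuous_const).add (hQc.smul continuous_const)
  · apply Subtype.ext
    show γval 0 = 1
    simp [hγval, hPdef, hQdef]
  · show γval 1 = _
    simp [hγval, hPdef, hQdef]

lemma path_to_self (g : SU2) (hd : 0 < dd g) :
    ∃ γ : ℝ → SU2, Continuous γ ∧ γ 0 = 1 ∧ γ 1 = g ∧
      ∀ t, ∃ p q : ℂ, (γ t).1 = p • 1 + q • g.1 := by
  obtain ⟨γ, hc, h0, hspan, h1⟩ := torus_path g hd (Real.arccos (g.1 0 0).re)
  have hdd := dd_eq g
  have h₁ : -1 ≤ (g.1 0 0).re := by nlinarith [dd_nonneg g]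
  have h₂ : (g.1 0 0).re ≤ 1 := by nlinarith [dd_nonneg g]
  have hs : Real.sqrt (dd g) ≠ 0 := ne_of_gt (Real.sqrt_pos.mpr hd)
  refine ⟨γ, hc, h0, ?_, hspan⟩
  apply Subtype.ext
  rw [h1, Real.cos_arccos h₁ h₂, Real.sin_arccos]
  rw [show 1 - (g.1 0 0).re ^ 2 = dd g by linarith, div_self hs]
  push_cast
  simp

lemma path_to_negone (g : SU2) (hd : 0 < dd g) :
    ∃ γ : ℝ → SU2, Continuous γ ∧ γ 0 = 1 ∧ (γ 1).1 = -1 ∧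
      ∀ t, ∃ p q : ℂ, (γ t).1 = p • 1 + q • g.1 := by
  obtain ⟨γ, hc, h0, hspan, h1⟩ := torus_path g hd Real.pi
  refine ⟨γ, hc, h0, ?_, hspan⟩
  rw [h1]
  simp [Real.cos_pi, Real.sin_pi]

lemma scalar_of_not_dd (g : SU2) (hd : ¬ 0 < dd g) : g.1 = ((g.1 0 0).re : ℂ) • 1 := by
  have h0 : dd g = 0 := le_antisymm (not_lt.mp hd) (dd_nonneg g)
  rw [dd] at h0
  have him : (g.1 0 0).im = 0 := by
    nlinarith [Complex.normSq_nonneg (g.1 0 1), sq_nonneg (g.1 0 0).im]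
  have hb : g.1 0 1 = 0 := by
    apply Complex.normSq_eq_zero.mp
    nlinarith [sq_nonneg (g.1 0 0).im, Complex.normSq_nonneg (g.1 0 1)]
  obtain ⟨h11, h10, -⟩ := su2_entries g
  have ha : g.1 0 0 = ((g.1 0 0).re : ℂ) := by
    apply Complex.ext <;> simp [him]
  ext i j
  fin_cases i <;> fin_cases j <;>
    simp [Matrix.one_apply, h11, h10, hb, Complex.star_def] <;>
    rw [ha] <;> simp [Complex.conj_ofReal]

lemma comm_of_not_dd {h : SU2} (hd : ¬ 0 < dd h) (X : SU2) : X * h = h * X := by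
  apply Subtype.ext
  show X.1 * h.1 = h.1 * X.1
  rw [scalar_of_not_dd h hd, mul_smul_comm, smul_mul_assoc, mul_one, one_mul]

lemma comm_of_span {g X : SU2} (hcomm : g.1 * X.1 = X.1 * g.1)
    {M : Matrix (Fin 2) (Fin 2) ℂ} {p q : ℂ} (hM : M = p • 1 + q • g.1) :
    M * X.1 = X.1 * M := by
  rw [hM, add_mul, mul_add, smul_mul_assoc, smul_mul_assoc, mul_smul_comm, mul_smul_comm,
    one_mul, mul_one, hcomm]

lemma key (g h k : SU2) (hgh : g * h = h * g) (hgk : g * k = k * g) (hhk : h * k = k * h) :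
    ∃ γ : ℝ → SU2, Continuous γ ∧ γ 0 = 1 ∧ γ 1 = g ∧
      ∀ t, γ t * h = h * γ t ∧ γ t * k = k * γ t := by
  have hval : ∀ (x y : SU2), x * y = y * x → x.1 * y.1 = y.1 * x.1 := fun x y hxy =>
    congrArg Subtype.val hxy
  by_cases hg : 0 < dd g
  · obtain ⟨γ, hc, h0, h1, hspan⟩ := path_to_self g hg
    refine ⟨γ, hc, h0, h1, fun t => ?_⟩
    obtain ⟨p, q, hpq⟩ := hspan t
    exact ⟨Subtype.ext (comm_of_span (hval g h hgh) hpq),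
      Subtype.ext (comm_of_span (hval g k hgk) hpq)⟩
  · have hsc := scalar_of_not_dd g hg
    have hdd0 : dd g = 0 := le_antisymm (not_lt.mp hg) (dd_nonneg g)
    have hc2 : (g.1 0 0).re * (g.1 0 0).re = 1 := by nlinarith [dd_eq g]
    rcases mul_self_eq_one_iff.mp hc2 with hc1 | hc1
    · have hg1 : g = 1 := Subtype.ext (by rw [hsc, hc1]; push_cast; simp)
      exact ⟨fun _ => 1, continuous_const, rfl, hg1.symm,
        fun t => ⟨by rw [one_mul, mul_one], by rw [one_mul, mul_one]⟩⟩
    · have hgneg : g.1 = -1 := by rw [hsc, hc1]; push_cast; simp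
      by_cases hh : 0 < dd h
      · obtain ⟨γ, hcont, h0, h1, hspan⟩ := path_to_negone h hh
        refine ⟨γ, hcont, h0, Subtype.ext (h1.trans hgneg.symm), fun t => ?_⟩
        obtain ⟨p, q, hpq⟩ := hspan t
        exact ⟨Subtype.ext (comm_of_span rfl hpq),
          Subtype.ext (comm_of_span (hval h k hhk) hpq)⟩
      · by_cases hk : 0 < dd k
        · obtain ⟨γ, hcont, h0, h1, hspan⟩ := path_to_negone k hk
          refine ⟨γ, hcont, h0, Subtype.ext (h1.trans hgneg.symm), fun t => ?_⟩
          obtain ⟨p, q, hpq⟩ := hspan t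
          exact ⟨(comm_of_not_dd hh (γ t)),
            Subtype.ext (comm_of_span rfl hpq)⟩
        · have hmE : !![Complex.I, (0:ℂ); 0, -Complex.I] ∈
              Matrix.specialUnitaryGroup (Fin 2) ℂ := by
            have hm := mem_su2 Complex.I 0
              (by simp [Complex.star_def, Complex.conj_I, Complex.I_mul_I])
            have he : !![Complex.I, (0:ℂ); -star (0:ℂ), star Complex.I] =
                !![Complex.I, (0:ℂ); 0, -Complex.I] := by
              norm_num [Complex.star_def, Complex.conj_I]
            rwa [he] at hm
          set E : SU2 := ⟨!![Complex.I, (0:ℂ); 0, -Complex.I], hmE⟩ with hE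
          have hdE : 0 < dd E := by norm_num [dd, hE]
          obtain ⟨γ, hcont, h0, h1, hspan⟩ := path_to_negone E hdE
          exact ⟨γ, hcont, h0, Subtype.ext (h1.trans hgneg.symm),
            fun t => ⟨comm_of_not_dd hh (γ t), comm_of_not_dd hk (γ t)⟩⟩

lemma joinedIn_aux {X : Type*} [TopologicalSpace X] {S : Set X} {f : ℝ → X}
    (hf : Continuous f) (hmem : ∀ t, f t ∈ S) : JoinedIn S (f 0) (f 1) := by
  refine ⟨{ toFun := fun t => f t.1,
            continuous_toFun := hf.comp continuous_subtype_val,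
            source' := by norm_num,
            target' := by norm_num }, fun t => hmem _⟩

end SU2Conn

/-- For every natural number `n`, the subspace of `SU(2)³` of triples `(A, B, C)` with
`Aⁿ` commuting with `B` and `C`, and `B` commuting with `C`, is connected. -/
theorem connected_closure_D0 (n : ℕ) :
    ConnectedSpace {p : SU2 × SU2 × SU2 |
      p.1 ^ n * p.2.1 = p.2.1 * p.1 ^ n ∧
      p.1 ^ n * p.2.2 = p.2.2 * p.1 ^ n ∧
      p.2.1 * p.2.2 = p.2.2 * p.2.1} := by
  apply Subtype.connectedSpace
  apply IsPathConnected.isConnected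
  refine ⟨((1 : SU2), (1 : SU2), (1 : SU2)), by simp [Set.mem_setOf_eq], ?_⟩
  rintro ⟨A, B, C⟩ ⟨hAB, hAC, hBC⟩
  obtain ⟨γA, hcA, hA0, hA1, -⟩ := key A 1 1 (by rw [mul_one, one_mul])
    (by rw [mul_one, one_mul]) (by rw [mul_one])
  obtain ⟨γB, hcB, hB0, hB1, hBcomm⟩ := key B (A ^ n) 1 hAB.symm
    (by rw [mul_one, one_mul]) (by rw [mul_one, one_mul])
  obtain ⟨γC, hcC, hC0, hC1, hCcomm⟩ := key C (A ^ n) B hAC.symm hBC.symm hAB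
  have j1 : JoinedIn {p : SU2 × SU2 × SU2 |
      p.1 ^ n * p.2.1 = p.2.1 * p.1 ^ n ∧
      p.1 ^ n * p.2.2 = p.2.2 * p.1 ^ n ∧
      p.2.1 * p.2.2 = p.2.2 * p.2.1} ((1 : SU2), (1 : SU2), (1 : SU2)) (A, (1 : SU2), (1 : SU2)) := by
    have := joinedIn_aux (S := {p : SU2 × SU2 × SU2 |
      p.1 ^ n * p.2.1 = p.2.1 * p.1 ^ n ∧
      p.1 ^ n * p.2.2 = p.2.2 * p.1 ^ n ∧
      p.2.1 * p.2.2 = p.2.2 * p.2.1}) (f := fun t => ((γA t, 1, 1) : SU2 × SU2 × SU2))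
      (hcA.prodMk continuous_const)
      (fun t => by simp [Set.mem_setOf_eq])
    simpa only [hA0, hA1] using this
  have j2 : JoinedIn {p : SU2 × SU2 × SU2 |
      p.1 ^ n * p.2.1 = p.2.1 * p.1 ^ n ∧
      p.1 ^ n * p.2.2 = p.2.2 * p.1 ^ n ∧
      p.2.1 * p.2.2 = p.2.2 * p.2.1} (A, (1 : SU2), (1 : SU2)) (A, B, (1 : SU2)) := by
    have := joinedIn_aux (S := {p : SU2 × SU2 × SU2 |
      p.1 ^ n * p.2.1 = p.2.1 * p.1 ^ n ∧
      p.1 ^ n * p.2.2 = p.2.2 * p.1 ^ n ∧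
      p.2.1 * p.2.2 = p.2.2 * p.2.1}) (f := fun t => ((A, γB t, 1) : SU2 × SU2 × SU2))
      (continuous_const.prodMk (hcB.prodMk continuous_const))
      (fun t => by
        refine ⟨((hBcomm t).1).symm, by rw [mul_one, one_mul], by rw [mul_one, one_mul]⟩)
    simpa only [hB0, hB1] using this
  have j3 : JoinedIn {p : SU2 × SU2 × SU2 |
      p.1 ^ n * p.2.1 = p.2.1 * p.1 ^ n ∧
      p.1 ^ n * p.2.2 = p.2.2 * p.1 ^ n ∧
      p.2.1 * p.2.2 = p.2.2 * p.2.1} (A, B, (1 : SU2)) (A, B, C) := by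
    have := joinedIn_aux (S := {p : SU2 × SU2 × SU2 |
      p.1 ^ n * p.2.1 = p.2.1 * p.1 ^ n ∧
      p.1 ^ n * p.2.2 = p.2.2 * p.1 ^ n ∧
      p.2.1 * p.2.2 = p.2.2 * p.2.1}) (f := fun t => ((A, B, γC t) : SU2 × SU2 × SU2))
      (continuous_const.prodMk (continuous_const.prodMk hcC))
      (fun t => ⟨hAB, ((hCcomm t).1).symm, ((hCcomm t).2).symm⟩)
    simpa only [hC0, hC1] using this
  exact (j1.trans j2).trans j3
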